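/- arXiv:1310.0192 — 3 statements merged into one kernel-verified Lean document; each statement's English description precedes it below -/
import Mathlib

section
/- Let x solve x'(t) = F(y(t), x(t)) with continuous forcing y ≥ 0 and nonnegative initial condition. If y(0) > 0 or x₂(0) > 0, then x_k(t) > 0 for every k ∈ {0, 2, 3, …, K} and every t > 0. -/
open Set Filter Topology

lemma ode_aux (u f g : ℝ → ℝ) (hg : Continuous g)
    (hu : ∀ t ∈ Ici (0:ℝ), HasDerivWithinAt u (f t + g t * u t) (Ici 0) t)
    (hf : ContinuousOn f (Ici 0)) (hf0 : ∀ t ∈ Ici (0:ℝ), 0 ≤ f t)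
    (hu0 : 0 ≤ u 0) :
    (∀ t ∈ Ici (0:ℝ), 0 ≤ u t) ∧
    (0 < u 0 → ∀ t ∈ Ici (0:ℝ), 0 < u t) ∧
    (∀ r ∈ Ici (0:ℝ), 0 < f r → ∀ t > r, 0 < u t) := by
  set G : ℝ → ℝ := fun t => ∫ s in (0:ℝ)..t, g s with hGdef
  have hGd : ∀ t, HasDerivAt G (g t) t := fun t =>
    (hg.integral_hasStrictDerivAt 0 t).hasDerivAt
  have hGc : Continuous G := continuous_iff_continuousAt.2 fun t => (hGd t).continuousAt
  set w : ℝ → ℝ := fun t => u t * Real.exp (-G t) with hwdef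
  have huc : ContinuousOn u (Ici 0) := fun t ht => (hu t ht).continuousWithinAt
  have hwc : ContinuousOn w (Ici 0) := huc.mul (hGc.neg.rexp).continuousOn
  have hwd : ∀ t ∈ Ici (0:ℝ), HasDerivWithinAt w (f t * Real.exp (-G t)) (Ici 0) t := by
    intro t ht
    have h1 : HasDerivWithinAt (fun s => Real.exp (-G s))
        (Real.exp (-G t) * (-g t)) (Ici 0) t := ((hGd t).neg.exp).hasDerivWithinAt
    have h2 : HasDerivWithinAt (fun s => u s * Real.exp (-G s))
        ((f t + g t * u t) * Real.exp (-G t) + u t * (Real.exp (-G t) * -g t)) (Ici 0) t :=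
      (hu t ht).mul h1
    convert h2 using 1
    ring
  have hw0 : w 0 = u 0 := by simp [hwdef, hGdef, intervalIntegral.integral_same]
  have hmono : MonotoneOn w (Ici 0) := by
    apply monotoneOn_of_hasDerivWithinAt_nonneg (convex_Ici 0) hwc
      (f' := fun t => f t * Real.exp (-G t))
    · intro t ht
      rw [interior_Ici, mem_Ioi] at ht
      exact (((hwd t ht.le).hasDerivAt (Ici_mem_nhds ht)).hasDerivWithinAt)
    · intro t ht
      rw [interior_Ici, mem_Ioi] at ht
      exact mul_nonneg (hf0 t ht.le) (Real.exp_nonneg _)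
  have key : ∀ s ∈ Ici (0:ℝ), ∀ t, s ≤ t → 0 < w s → 0 < u t := by
    intro s hs t hst hws
    have h1 : w s ≤ w t := hmono hs (le_trans hs hst) hst
    have h2 : 0 < w t := lt_of_lt_of_le hws h1
    have hwt : w t = u t * Real.exp (-G t) := rfl
    rw [hwt] at h2
    have he := Real.exp_pos (-G t)
    nlinarith [h2, he]
  have nonneg : ∀ t ∈ Ici (0:ℝ), 0 ≤ u t := by
    intro t ht
    have h1 : w 0 ≤ w t := hmono self_mem_Ici ht ht
    rw [hw0] at h1
    have h2 : 0 ≤ w t := le_trans hu0 h1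
    have hwt : w t = u t * Real.exp (-G t) := rfl
    rw [hwt] at h2
    have he := Real.exp_pos (-G t)
    nlinarith [h2, he]
  refine ⟨nonneg, ?_, ?_⟩
  · intro h0 t ht
    exact key 0 self_mem_Ici t ht (by rw [hw0]; exact h0)
  · intro r hr hfr t htr
    have hS : {s | 0 < f s} ∈ 𝓝[Ici r] r := by
      have h1 : {s | 0 < f s} ∈ 𝓝[Ici 0] r := (hf r hr).eventually (eventually_gt_nhds hfr)
      exact nhdsWithin_mono r (Ici_subset_Ici.mpr hr) h1
    obtain ⟨b, hrb, hIcc⟩ := (mem_nhdsGE_iff_exists_Icc_subset).1 hS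
    set c : ℝ := min b ((r + t) / 2) with hcdef
    have hrc : r < c := lt_min hrb (by linarith)
    have hct : c < t := lt_of_le_of_lt (min_le_right _ _) (by linarith)
    have hcb : c ≤ b := min_le_left _ _
    have hsub : Icc r c ⊆ Ici (0:ℝ) := fun s hs => le_trans hr hs.1
    have hstrict : StrictMonoOn w (Icc r c) := by
      apply strictMonoOn_of_hasDerivWithinAt_pos (convex_Icc r c) (hwc.mono hsub)
        (f' := fun s => f s * Real.exp (-G s))
      · intro s hs
        rw [interior_Icc] at hs
        have hs0 : (0:ℝ) < s := lt_of_le_of_lt hr hs.1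
        exact (((hwd s hs0.le).hasDerivAt (Ici_mem_nhds hs0)).hasDerivWithinAt)
      · intro s hs
        rw [interior_Icc] at hs
        have : 0 < f s := hIcc ⟨hs.1.le, le_trans hs.2.le hcb⟩
        exact mul_pos this (Real.exp_pos _)
    have hwr : 0 ≤ w r := by
      have h1 : w 0 ≤ w r := hmono self_mem_Ici hr hr
      rw [hw0] at h1; exact le_trans hu0 h1
    have hwc' : 0 < w c :=
      lt_of_le_of_lt hwr (hstrict (left_mem_Icc.2 hrc.le) (right_mem_Icc.2 hrc.le) hrc)
    exact key c (le_trans hr hrc.le) t hct.le hwc'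

/-- `IsSol K γ y a x`: `x = (x₀, x₂, …, x_{K+1})` solves `x' = F(y, x)` on `[0,∞)`
with `x(0) = a` (components indexed by `{0, 2, …, K+1}`, convention `x₁ := y`). -/
def IsSol (K : ℕ) (γ : ℕ → ℝ) (y : ℝ → ℝ) (a : ℕ → ℝ) (x : ℕ → ℝ → ℝ) : Prop :=
  (∀ k, x k 0 = a k) ∧
  (∀ t ∈ Ici (0:ℝ), HasDerivWithinAt (x 0) (x K t) (Ici 0) t) ∧
  (∀ t ∈ Ici (0:ℝ), HasDerivWithinAt (x (K+1)) (x K t) (Ici 0) t) ∧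
  (∀ k, 2 ≤ k → k ≤ K → ∀ t ∈ Ici (0:ℝ),
    HasDerivWithinAt (x k)
      ((if k = 2 then y t else x (k-1) t) + (γ k - x 0 t) * x k t) (Ici 0) t)

/-- If `y(0) > 0` or `x₂(0) > 0`, then `x_k(t) > 0` for every
`k ∈ {0, 2, 3, …, K}` and every `t > 0`. -/
theorem ode_positivity (K : ℕ) (hK : 2 ≤ K) (γ : ℕ → ℝ)
    (y : ℝ → ℝ) (hyc : Continuous y) (hy : ∀ t ≥ (0:ℝ), 0 ≤ y t)
    (a : ℕ → ℝ) (ha : ∀ k, 0 ≤ a k)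
    (x : ℕ → ℝ → ℝ) (hx : IsSol K γ y a x)
    (hpos : 0 < y 0 ∨ 0 < x 2 0) :
    ∀ k, (k = 0 ∨ (2 ≤ k ∧ k ≤ K)) → ∀ t > (0:ℝ), 0 < x k t := by
  obtain ⟨hx0, hxd0, _hxdK1, hxdk⟩ := hx
  have x0cont : ContinuousOn (x 0) (Ici 0) := fun t ht => (hxd0 t ht).continuousWithinAt
  have x0e : Continuous (fun t => x 0 (max t 0)) :=
    x0cont.comp_continuous (continuous_id.max continuous_const) (fun t => le_max_right t 0)
  have hg : ∀ k, Continuous (fun t => γ k - x 0 (max t 0)) := fun k =>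
    continuous_const.sub x0e
  have hderiv : ∀ k, 2 ≤ k → k ≤ K → ∀ t ∈ Ici (0:ℝ),
      HasDerivWithinAt (x k)
        ((if k = 2 then y t else x (k-1) t) + (γ k - x 0 (max t 0)) * x k t) (Ici 0) t := by
    intro k h2 hkK t ht
    rw [max_eq_left ht]
    exact hxdk k h2 hkK t ht
  have cascade : ∀ k, 2 ≤ k → k ≤ K →
      (∀ t ∈ Ici (0:ℝ), 0 ≤ x k t) ∧ (∀ t > (0:ℝ), 0 < x k t) := by
    intro k hk2
    induction k, hk2 using Nat.le_induction with
    | base =>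
      intro _
      have hu : ∀ t ∈ Ici (0:ℝ),
          HasDerivWithinAt (x 2) (y t + (fun t => γ 2 - x 0 (max t 0)) t * x 2 t) (Ici 0) t := by
        intro t ht
        simpa using hderiv 2 le_rfl hK t ht
      obtain ⟨h1, h2, h3⟩ := ode_aux (x 2) y (fun t => γ 2 - x 0 (max t 0)) (hg 2) hu
        hyc.continuousOn (fun t ht => hy t ht) (by rw [hx0]; exact ha 2)
      refine ⟨h1, fun t ht => ?_⟩
      rcases hpos with hy0 | hx20
      · exact h3 0 self_mem_Ici hy0 t ht
      · exact h2 hx20 t ht.le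
    | succ k hk IH =>
      intro hk1K
      have hkK : k ≤ K := le_trans (Nat.le_succ k) hk1K
      obtain ⟨IH1, IH2⟩ := IH hkK
      have hfc : ContinuousOn (x k) (Ici 0) := fun t ht =>
        (hxdk k hk hkK t ht).continuousWithinAt
      have hu : ∀ t ∈ Ici (0:ℝ),
          HasDerivWithinAt (x (k+1))
            (x k t + (fun t => γ (k+1) - x 0 (max t 0)) t * x (k+1) t) (Ici 0) t := by
        intro t ht
        have h := hderiv (k+1) (by omega) hk1K t ht
        rw [if_neg (by omega), Nat.add_sub_cancel] at h
        exact h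
      obtain ⟨h1, _h2, h3⟩ := ode_aux (x (k+1)) (x k) (fun t => γ (k+1) - x 0 (max t 0))
        (hg (k+1)) hu hfc IH1 (by rw [hx0]; exact ha (k+1))
      refine ⟨h1, fun t ht => ?_⟩
      exact h3 (t/2) (mem_Ici.mpr (le_of_lt (half_pos ht))) (IH2 (t/2) (half_pos ht)) t (by linarith)
  intro k hk t ht
  rcases hk with hk0 | ⟨hk2, hkK⟩
  · subst hk0
    have hKc : ContinuousOn (x K) (Ici 0) := fun s hs =>
      (hxdk K hK le_rfl s hs).continuousWithinAt
    have hu : ∀ s ∈ Ici (0:ℝ),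
        HasDerivWithinAt (x 0) (x K s + (fun _ : ℝ => (0:ℝ)) s * x 0 s) (Ici 0) s := by
      intro s hs
      have h := hxd0 s hs
      convert h using 1
      ring
    obtain ⟨_, _, h3⟩ := ode_aux (x 0) (x K) (fun _ => 0) continuous_const hu hKc
      (cascade K hK le_rfl).1 (by rw [hx0]; exact ha 0)
    exact h3 (t/2) (mem_Ici.mpr (le_of_lt (half_pos ht))) ((cascade K hK le_rfl).2 (t/2) (half_pos ht)) t
      (by linarith)
  · exact (cascade k hk2 hkK).2 t ht
end

section
/- Let x solve x'(t) = F(y(t), x(t)) with continuous forcing y ≥ 0 and nonnegative initial condition, and suppose x_k(t) > 0 for all k = 2,…,K and t > 0, and that x₀ is bounded. Then ∫₀^∞ y(u) du < ∞, ∫₀^∞ x_k(u) du < ∞ for every k = 2,…,K, and the limit x₀(∞) satisfies x₀(∞) > γ_k for every k = 2,…,K. -/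
open Set Filter MeasureTheory

private lemma ftc_aux (f f' : ℝ → ℝ)
    (hd : ∀ t ∈ Ici (0:ℝ), HasDerivWithinAt f (f' t) (Ici 0) t)
    (hc' : ContinuousOn f' (Ici 0)) {T : ℝ} (hT : 0 ≤ T) :
    ∫ t in (0:ℝ)..T, f' t = f T - f 0 := by
  have hcf : ContinuousOn f (Ici 0) := fun t ht => (hd t ht).continuousWithinAt
  refine intervalIntegral.integral_eq_sub_of_hasDeriv_right_of_le hT
    (hcf.mono Icc_subset_Ici_self) (fun t ht => (hd t ht.1.le).mono ?_) ?_
  · exact fun s hs => le_trans ht.1.le (le_of_lt hs)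
  · exact (hc'.mono (by rw [uIcc_of_le hT]; exact Icc_subset_Ici_self)).intervalIntegrable

private lemma int_of_bdd (f : ℝ → ℝ) (hc : ContinuousOn f (Ici 0))
    (hnn : ∀ t ∈ Ici (0:ℝ), 0 ≤ f t) (B : ℝ)
    (hB : ∀ T ≥ (0:ℝ), (∫ t in (0:ℝ)..T, f t) ≤ B) : IntegrableOn f (Ici 0) := by
  rw [integrableOn_Ici_iff_integrableOn_Ioi]
  have hfi : ∀ i : ℝ, IntegrableOn f (Ioc 0 i) := by
    intro i
    rcases le_or_gt i 0 with h | h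
    · rw [Ioc_eq_empty (by simpa using h)]; exact integrableOn_empty
    · exact ((hc.mono Icc_subset_Ici_self).integrableOn_Icc (a := 0) (b := i)).mono_set
        Ioc_subset_Icc_self
  refine integrableOn_Ioi_of_intervalIntegral_norm_bounded B 0 hfi tendsto_id ?_
  filter_upwards [eventually_ge_atTop (0:ℝ)] with i hi
  have : ∫ t in (0:ℝ)..i, ‖f t‖ = ∫ t in (0:ℝ)..i, f t := by
    refine intervalIntegral.integral_congr fun t ht => ?_
    rw [uIcc_of_le hi] at ht
    exact Real.norm_of_nonneg (hnn t ht.1)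
  rw [this]; exact hB i hi

private lemma exists_small (f : ℝ → ℝ) (hint : IntegrableOn f (Ici 0))
    {ε : ℝ} (hε : 0 < ε) (T : ℝ) : ∃ t, T ≤ t ∧ 0 ≤ t ∧ f t < ε := by
  by_contra h
  push_neg at h
  set S := max T 0
  have hall : ∀ t ∈ Ioi S, ε ≤ f t := fun t ht =>
    h t (le_trans (le_max_left _ _) (le_of_lt ht)) (le_trans (le_max_right _ _) (le_of_lt ht))
  have hfint : IntegrableOn f (Ioi S) :=
    hint.mono_set fun t ht => Set.mem_Ici.mpr (le_trans (le_max_right _ _) (le_of_lt ht))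
  have hconst : IntegrableOn (fun _ => ε) (Ioi S) := by
    refine Integrable.mono' hfint aestronglyMeasurable_const ?_
    rw [ae_restrict_iff' measurableSet_Ioi]
    exact Eventually.of_forall fun t ht => by
      rw [Real.norm_of_nonneg hε.le]; exact hall t ht
  rw [integrableOn_const_iff] at hconst
  rcases hconst with h0 | hfin
  · exact hε.ne' (by simpa using h0)
  · simp [Real.volume_Ioi] at hfin

private lemma step_aux (x0 xk u : ℝ → ℝ) (c C L : ℝ)
    (hx0c : ContinuousOn x0 (Ici 0))
    (huc : ContinuousOn u (Ici 0)) (hun : ∀ t ∈ Ici (0:ℝ), 0 ≤ u t)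
    (hkc : ContinuousOn xk (Ici 0)) (hkn : ∀ t ∈ Ici (0:ℝ), 0 ≤ xk t)
    (hd : ∀ t ∈ Ici (0:ℝ), HasDerivWithinAt xk (u t + (c - x0 t) * xk t) (Ici 0) t)
    (hint : IntegrableOn xk (Ici 0))
    (hC : ∀ t ∈ Ici (0:ℝ), |c - x0 t| ≤ C)
    (hlt : ∀ t ∈ Ici (0:ℝ), x0 t < L)
    (hkpos : ∀ t > (0:ℝ), 0 < xk t) :
    IntegrableOn u (Ici 0) ∧ c < L := by
  set g : ℝ → ℝ := fun t => (c - x0 t) * xk t with hg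
  have hgc : ContinuousOn g (Ici 0) := (continuousOn_const.sub hx0c).mul hkc
  have hgint : IntegrableOn g (Ici 0) := by
    refine Integrable.mono' (hint.const_mul C) (hgc.aestronglyMeasurable measurableSet_Ici) ?_
    rw [ae_restrict_iff' measurableSet_Ici]
    refine Eventually.of_forall fun t ht => ?_
    have : ‖g t‖ = |c - x0 t| * xk t := by
      rw [hg]; simp only [Real.norm_eq_abs, abs_mul, abs_of_nonneg (hkn t ht)]
    rw [this]
    exact mul_le_mul_of_nonneg_right (hC t ht) (hkn t ht)
  have hgabs : IntegrableOn (fun t => |g t|) (Ici 0) := hgint.abs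
  have hGB : ∀ T ≥ (0:ℝ), |∫ t in (0:ℝ)..T, g t| ≤ ∫ t in Ici (0:ℝ), |g t| := by
    intro T hT
    refine le_trans (intervalIntegral.abs_integral_le_integral_abs hT) ?_
    rw [intervalIntegral.integral_of_le hT]
    refine setIntegral_mono_set hgabs (Eventually.of_forall fun t => abs_nonneg _) ?_
    exact (Ioc_subset_Icc_self.trans Icc_subset_Ici_self).eventuallyLE
  have hFTC : ∀ T ≥ (0:ℝ), (∫ t in (0:ℝ)..T, u t) + (∫ t in (0:ℝ)..T, g t)
      = xk T - xk 0 := by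
    intro T hT
    have h1 : ∫ t in (0:ℝ)..T, (u t + g t) = xk T - xk 0 :=
      ftc_aux xk (fun t => u t + g t) hd (huc.add hgc) hT
    rw [← h1]
    rw [← intervalIntegral.integral_add]
    · exact (huc.mono (by rw [uIcc_of_le hT]; exact Icc_subset_Ici_self)).intervalIntegrable
    · exact (hgc.mono (by rw [uIcc_of_le hT]; exact Icc_subset_Ici_self)).intervalIntegrable
  have huint : IntegrableOn u (Ici 0) := by
    refine int_of_bdd u huc hun (1 + ∫ t in Ici (0:ℝ), |g t|) ?_
    intro T hT
    obtain ⟨t, htT, ht0, hsmall⟩ := exists_small xk hint one_pos T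
    have h1 : (∫ s in (0:ℝ)..T, u s) ≤ ∫ s in (0:ℝ)..t, u s := by
      refine intervalIntegral.integral_mono_interval le_rfl hT htT ?_ ?_
      · exact (ae_restrict_iff' measurableSet_Ioc).mpr
          (Eventually.of_forall fun s hs => hun s hs.1.le)
      · exact (huc.mono (by rw [uIcc_of_le ht0]; exact Icc_subset_Ici_self)).intervalIntegrable
    have h2 := hFTC t ht0
    have h3 : (∫ s in (0:ℝ)..t, u s) = xk t - xk 0 - ∫ s in (0:ℝ)..t, g s := by
      linarith
    refine h1.trans ?_
    rw [h3]
    have h4 := hGB t ht0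
    have h5 := hkn 0 Set.self_mem_Ici
    have h6 := abs_le.mp (le_refl |∫ s in (0:ℝ)..t, g s|) |>.1
    have := neg_abs_le (∫ s in (0:ℝ)..t, g s)
    linarith
  refine ⟨huint, ?_⟩
  by_contra hcL
  push_neg at hcL
  have hgpos : ∀ t > (0:ℝ), 0 < g t := fun t ht =>
    mul_pos (by have := hlt t ht.le; linarith) (hkpos t ht)
  have hgnn : ∀ t ∈ Ici (0:ℝ), 0 ≤ g t := by
    intro t ht
    exact mul_nonneg (by have := hlt t ht; linarith) (hkn t ht)
  set δ := ∫ t in (1:ℝ)..2, g t with hδ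
  have hsub12 : uIcc (1:ℝ) 2 ⊆ Ici 0 := by
    rw [uIcc_of_le (by norm_num : (1:ℝ) ≤ 2)]
    exact fun s hs => le_trans zero_le_one hs.1
  have hδpos : 0 < δ := by
    refine intervalIntegral.intervalIntegral_pos_of_pos_on
      ((hgc.mono hsub12).intervalIntegrable)
      (fun s hs => hgpos s (lt_trans zero_lt_one hs.1)) one_lt_two
  obtain ⟨t, ht2, ht0, hsmall⟩ := exists_small xk hint hδpos 2
  have hδle : δ ≤ ∫ s in (0:ℝ)..t, g s := by
    refine intervalIntegral.integral_mono_interval zero_le_one one_le_two ht2 ?_ ?_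
    · exact (ae_restrict_iff' measurableSet_Ioc).mpr
        (Eventually.of_forall fun s hs => hgnn s hs.1.le)
    · exact (hgc.mono (by rw [uIcc_of_le ht0]; exact Icc_subset_Ici_self)).intervalIntegrable
  have hunn : 0 ≤ ∫ s in (0:ℝ)..t, u s := by
    refine intervalIntegral.integral_nonneg ht0 fun s hs => hun s hs.1
  have h2 := hFTC t ht0
  have h5 := hkn 0 Set.self_mem_Ici
  linarith

/-- If `x_k(t) > 0` for all `2 ≤ k ≤ K` and `t > 0`, and `x₀` is bounded, then
`∫₀^∞ y < ∞`, `∫₀^∞ x_k < ∞` for every `2 ≤ k ≤ K`, and the (finite) limit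
`x₀(∞)` satisfies `x₀(∞) > γ_k` for every `2 ≤ k ≤ K`. -/
theorem ode_integrability (K : ℕ) (hK : 2 ≤ K) (γ : ℕ → ℝ)
    (y : ℝ → ℝ) (hyc : Continuous y) (hy : ∀ t ≥ (0:ℝ), 0 ≤ y t)
    (a : ℕ → ℝ) (ha : ∀ k, 0 ≤ a k)
    (x : ℕ → ℝ → ℝ) (hx : IsSol K γ y a x)
    (hpos : ∀ k, 2 ≤ k → k ≤ K → ∀ t > (0:ℝ), 0 < x k t)
    (hbdd : ∃ M : ℝ, ∀ t ≥ (0:ℝ), x 0 t ≤ M) :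
    IntegrableOn y (Ici (0:ℝ)) ∧
    (∀ k, 2 ≤ k → k ≤ K → IntegrableOn (x k) (Ici (0:ℝ))) ∧
    ∃ L : ℝ, Tendsto (x 0) atTop (nhds L) ∧ ∀ k, 2 ≤ k → k ≤ K → γ k < L := by
  obtain ⟨hinit, hd0, -, hdk⟩ := hx
  obtain ⟨M, hM⟩ := hbdd
  have hcont : ∀ k, 2 ≤ k → k ≤ K → ContinuousOn (x k) (Ici 0) :=
    fun k h2 hk t ht => (hdk k h2 hk t ht).continuousWithinAt
  have hc0 : ContinuousOn (x 0) (Ici 0) := fun t ht => (hd0 t ht).continuousWithinAt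
  have hnn : ∀ k, 2 ≤ k → k ≤ K → ∀ t ∈ Ici (0:ℝ), 0 ≤ x k t := by
    intro k h2 hk t ht
    rcases eq_or_lt_of_le (show (0:ℝ) ≤ t from ht) with h | h
    · rw [← h, hinit k]; exact ha k
    · exact (hpos k h2 hk t h).le
  have hcK : ContinuousOn (x K) (Ici 0) := hcont K hK le_rfl
  -- x 0 is strictly monotone on Ici 0
  have hsm : StrictMonoOn (x 0) (Ici 0) := by
    refine strictMonoOn_of_deriv_pos (convex_Ici 0) hc0 fun t ht => ?_
    rw [interior_Ici] at ht
    have hda : HasDerivAt (x 0) (x K t) t :=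
      (hd0 t (Set.mem_Ici.mpr (le_of_lt ht))).hasDerivAt (Ici_mem_nhds ht)
    rw [hda.deriv]
    exact hpos K hK le_rfl t ht
  have hmono : MonotoneOn (x 0) (Ici 0) := hsm.monotoneOn
  -- the limit L
  set f : ℝ → ℝ := fun t => x 0 (max t 0) with hf
  have hfmono : Monotone f := fun s t hst =>
    hmono (le_max_right s 0) (le_max_right t 0) (max_le_max hst le_rfl)
  have hfbdd : BddAbove (range f) := ⟨M, by rintro _ ⟨t, rfl⟩; exact hM _ (le_max_right t 0)⟩
  have htendf : Tendsto f atTop (nhds (⨆ t, f t)) := tendsto_atTop_ciSup hfmono hfbdd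
  set L := ⨆ t, f t with hL
  have htend : Tendsto (x 0) atTop (nhds L) := by
    refine htendf.congr' ?_
    filter_upwards [eventually_ge_atTop (0:ℝ)] with t ht
    rw [hf]; simp [max_eq_left ht]
  have hx0le : ∀ t ∈ Ici (0:ℝ), x 0 t ≤ L := by
    intro t ht
    have : x 0 t = f t := by rw [hf]; simp [max_eq_left (Set.mem_Ici.mp ht)]
    rw [this]
    exact le_ciSup hfbdd t
  have hx0lt : ∀ t ∈ Ici (0:ℝ), x 0 t < L := by
    intro t ht
    exact lt_of_lt_of_le (hsm ht (by exact le_trans ht (le_of_lt (lt_add_one t)))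
      (lt_add_one t)) (hx0le (t+1) (le_trans ht (le_of_lt (lt_add_one t))))
  -- bound on |γ k - x 0 t|
  have hCbound : ∀ c : ℝ, ∀ t ∈ Ici (0:ℝ), |c - x 0 t| ≤ |c| + (max |x 0 0| |L|) := by
    intro c t ht
    have h1 : x 0 0 ≤ x 0 t := hmono Set.self_mem_Ici ht (Set.mem_Ici.mp ht)
    have h2 : x 0 t ≤ L := hx0le t ht
    have h3 : |x 0 t| ≤ max |x 0 0| |L| := by
      rcases le_or_gt 0 (x 0 t) with h | h
      · exact le_trans (by rw [abs_of_nonneg h]; exact h2.trans (le_abs_self L))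
          (le_max_right _ _)
      · refine le_trans ?_ (le_max_left _ _)
        rw [abs_of_neg h]
        exact le_trans (by linarith) (neg_le_abs _)
    calc |c - x 0 t| ≤ |c| + |x 0 t| := abs_sub _ _
      _ ≤ |c| + max |x 0 0| |L| := by linarith
  -- integrability of x K
  have hintK : IntegrableOn (x K) (Ici 0) := by
    refine int_of_bdd (x K) hcK (hnn K hK le_rfl) (M - x 0 0) ?_
    intro T hT
    rw [ftc_aux (x 0) (x K) hd0 hcK hT]
    have := hM T hT
    linarith
  -- the step, packaged
  have hstep : ∀ k, 2 ≤ k → k ≤ K → IntegrableOn (x k) (Ici 0) →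
      IntegrableOn (fun t => if k = 2 then y t else x (k-1) t) (Ici 0) ∧ γ k < L := by
    intro k h2 hk hintk
    refine step_aux (x 0) (x k) (fun t => if k = 2 then y t else x (k-1) t)
      (γ k) (|γ k| + max |x 0 0| |L|) L hc0 ?_ ?_ (hcont k h2 hk) (hnn k h2 hk)
      (hdk k h2 hk) hintk (hCbound (γ k)) hx0lt (hpos k h2 hk)
    · rcases eq_or_lt_of_le h2 with h | h
      · simp only [← h]
        simpa using hyc.continuousOn
      · have hne : k ≠ 2 := by omega
        simp only [hne, if_false]
        exact hcont (k-1) (by omega) (by omega)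
    · intro t ht
      rcases eq_or_lt_of_le h2 with h | h
      · simp only [← h]
        simpa using hy t ht
      · have hne : k ≠ 2 := by omega
        simp only [hne, if_false]
        exact hnn (k-1) (by omega) (by omega) t ht
  -- downward induction for integrability
  have key : ∀ d : ℕ, ∀ k, 2 ≤ k → k ≤ K → K ≤ k + d → IntegrableOn (x k) (Ici 0) := by
    intro d
    induction d with
    | zero =>
      intro k h2 hk hKk
      have : k = K := by omega
      rw [this]; exact hintK
    | succ d ih =>
      intro k h2 hk hKk
      rcases le_or_gt K (k + d) with h | h
      · exact ih k h2 hk h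
      · have h1 : k + 1 ≤ K := by omega
        have h2' : 2 ≤ k + 1 := by omega
        have hint1 : IntegrableOn (x (k+1)) (Ici 0) := ih (k+1) h2' h1 (by omega)
        have := (hstep (k+1) h2' h1 hint1).1
        have hne : k + 1 ≠ 2 := by omega
        simp only [hne, if_false, Nat.add_sub_cancel] at this
        exact this
  have hintk : ∀ k, 2 ≤ k → k ≤ K → IntegrableOn (x k) (Ici 0) :=
    fun k h2 hk => key K k h2 hk (by omega)
  have hy2 := hstep 2 le_rfl hK (hintk 2 le_rfl hK)
  refine ⟨?_, hintk, L, htend, fun k h2 hk => (hstep k h2 hk (hintk k h2 hk)).2⟩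
  have := hy2.1
  simpa using this
end

section
/- Let x solve x'(t) = F(0, x(t)) with nonnegative initial condition and define η_k = γ_{k-1} - γ_k for 3 ≤ k ≤ K, φ_{k,0}(t) = 1 and recursively φ_{k,i}(t) = ∫₀^t φ_{k-1,i-1}(u) e^{η_k u} du for 1 ≤ i ≤ k-2. Then for every k = 2,…,K and t ≥ 0, x_k(t) = (Σ_{i=0}^{k-2} x_{k-i}(0) φ_{k,i}(t)) · exp(-∫₀^t (x₀(u) - γ_k) du). -/
open Set Filter intervalIntegral

/-- The functions `φ_{k,i}`: `φ_{k,0} = 1` and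
`φ_{k,i}(t) = ∫₀ᵗ φ_{k-1,i-1}(u) e^{(γ_{k-1} - γ_k)u} du`. -/
noncomputable def phi (γ : ℕ → ℝ) : ℕ → ℕ → ℝ → ℝ
  | _, 0, _ => 1
  | k, (i+1), t =>
      ∫ u in (0:ℝ)..t, phi γ (k-1) i u * Real.exp ((γ (k-1) - γ k) * u)

open Set Filter intervalIntegral MeasureTheory Topology

lemma phi_continuous (γ : ℕ → ℝ) : ∀ i k, Continuous (phi γ k i)
  | 0, k => continuous_const
  | (i+1), k => by
      have h : Continuous fun u => phi γ (k-1) i u * Real.exp ((γ (k-1) - γ k) * u) :=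
        (phi_continuous γ i (k-1)).mul
          (Real.continuous_exp.comp (continuous_const.mul continuous_id))
      exact intervalIntegral.continuous_primitive (fun a b => h.intervalIntegrable a b) 0

lemma phi_hasDerivAt (γ : ℕ → ℝ) (k i : ℕ) (t : ℝ) :
    HasDerivAt (phi γ k (i+1)) (phi γ (k-1) i t * Real.exp ((γ (k-1) - γ k) * t)) t := by
  have h : Continuous fun u => phi γ (k-1) i u * Real.exp ((γ (k-1) - γ k) * u) :=
    (phi_continuous γ i (k-1)).mul
      (Real.continuous_exp.comp (continuous_const.mul continuous_id))
  exact intervalIntegral.integral_hasDerivAt_right (h.intervalIntegrable 0 t)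
    (h.stronglyMeasurableAtFilter _ _) h.continuousAt

lemma phi_zero (γ : ℕ → ℝ) (k i : ℕ) : phi γ k (i+1) 0 = 0 := by
  simp [phi]

/-- Key ODE uniqueness lemma. -/
lemma key (g : ℝ → ℝ) (c : ℝ) (f S r : ℝ → ℝ)
    (hg : ContinuousOn g (Ici 0))
    (hf : ∀ t ∈ Ici (0:ℝ), HasDerivWithinAt f (r t + (c - g t) * f t) (Ici 0) t)
    (hS : ContinuousOn S (Ici 0))
    (hS' : ∀ t ∈ Ici (0:ℝ),
      HasDerivWithinAt S (r t * Real.exp (∫ u in (0:ℝ)..t, (g u - c))) (Ici 0) t)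
    (h0 : f 0 = S 0) :
    ∀ t ≥ (0:ℝ), f t = S t * Real.exp (-∫ u in (0:ℝ)..t, (g u - c)) := by
  set I : ℝ → ℝ := fun s => ∫ u in (0:ℝ)..s, (g u - c) with hIdef
  have hgc : ContinuousOn (fun u => g u - c) (Ici 0) := hg.sub continuousOn_const
  have hint : ∀ t ∈ Ici (0:ℝ), IntervalIntegrable (fun u => g u - c) volume 0 t := by
    intro t ht
    exact (hgc.mono (by rw [uIcc_of_le ht]; exact Icc_subset_Ici_self)).intervalIntegrable
  have hI : ∀ t ∈ Ici (0:ℝ), HasDerivWithinAt I (g t - c) (Ici 0) t := by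
    intro t ht
    rcases eq_or_lt_of_le (mem_Ici.mp ht) with h0t | h0t
    · subst h0t
      have hmeas : StronglyMeasurableAtFilter (fun u => g u - c) (𝓝[>] (0:ℝ)) volume :=
        ⟨Ici 0, mem_of_superset self_mem_nhdsWithin Ioi_subset_Ici_self,
          hgc.aestronglyMeasurable measurableSet_Ici⟩
      exact intervalIntegral.integral_hasDerivWithinAt_right (hint 0 ht) hmeas
        ((hgc 0 ht).mono Ioi_subset_Ici_self)
    · have hca : ContinuousAt (fun u => g u - c) t :=
        (hgc t ht).continuousAt (Ici_mem_nhds h0t)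
      have hmeas : StronglyMeasurableAtFilter (fun u => g u - c) (𝓝 t) volume :=
        ⟨Ici 0, Ici_mem_nhds h0t, hgc.aestronglyMeasurable measurableSet_Ici⟩
      exact (intervalIntegral.integral_hasDerivAt_right (hint t ht) hmeas
        hca).hasDerivWithinAt
  have hIcont : ContinuousOn I (Ici 0) := fun t ht => (hI t ht).continuousWithinAt
  set F : ℝ → ℝ := fun s => f s * Real.exp (I s) - S s with hFdef
  have hF' : ∀ t ∈ Ici (0:ℝ), HasDerivWithinAt F 0 (Ici 0) t := by
    intro t ht
    have hd := ((hf t ht).mul ((hI t ht).exp)).sub (hS' t ht)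
    refine hd.congr_deriv ?_
    ring
  have hfc : ContinuousOn f (Ici 0) := fun t ht => (hf t ht).continuousWithinAt
  have hFc : ContinuousOn F (Ici 0) := (hfc.mul (hIcont.rexp)).sub hS
  intro t ht
  have hzero : F t = F 0 := by
    refine constant_of_has_deriv_right_zero (f := F) (a := 0) (b := t)
      (hFc.mono Icc_subset_Ici_self) (fun u hu => ?_) t ⟨ht, le_refl t⟩
    exact (hF' u hu.1).mono (Ici_subset_Ici.2 hu.1)
  have hF0 : F 0 = 0 := by
    simp [hFdef, hIdef, intervalIntegral.integral_same, h0]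
  have h1 : f t * Real.exp (I t) = S t := by
    have := hzero.trans hF0
    simpa [hFdef, sub_eq_zero] using this
  rw [Real.exp_neg]
  field_simp [Real.exp_ne_zero] at h1 ⊢
  linarith [h1]
/-- Explicit representation in the unforced case `y ≡ 0`: for `2 ≤ k ≤ K` and
`t ≥ 0`, `x_k(t) = (Σ_{i=0}^{k-2} x_{k-i}(0) φ_{k,i}(t)) e^{-∫₀ᵗ (x₀ - γ_k)}`. -/
theorem ode_explicit_formula (K : ℕ) (hK : 2 ≤ K) (γ : ℕ → ℝ)
    (a : ℕ → ℝ) (ha : ∀ k, 0 ≤ a k)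
    (x : ℕ → ℝ → ℝ) (hx : IsSol K γ (fun _ => 0) a x) :
    ∀ k, 2 ≤ k → k ≤ K → ∀ t ≥ (0:ℝ),
      x k t =
        (∑ i ∈ Finset.range (k - 1), a (k - i) * phi γ k i t) *
          Real.exp (-∫ u in (0:ℝ)..t, (x 0 u - γ k)) := by
  obtain ⟨ha0, hd0, _hdK1, hdk⟩ := hx
  have hx0 : ContinuousOn (x 0) (Ici 0) := fun t ht => (hd0 t ht).continuousWithinAt
  have hint : ∀ (c : ℝ), ∀ t ∈ Ici (0:ℝ),
      IntervalIntegrable (fun u => x 0 u - c) volume 0 t := by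
    intro c t ht
    exact ((hx0.sub continuousOn_const).mono
      (by rw [uIcc_of_le ht]; exact Icc_subset_Ici_self)).intervalIntegrable
  intro k hk2
  induction k, hk2 using Nat.le_induction with
  | base =>
    intro _hkK
    set S : ℝ → ℝ := fun t => ∑ i ∈ Finset.range 1, a (2 - i) * phi γ 2 i t with hSdef
    have hSconst : S = fun _ => a 2 := by
      funext t; simp [hSdef, phi]
    have hf : ∀ t ∈ Ici (0:ℝ),
        HasDerivWithinAt (x 2) ((fun _ : ℝ => (0:ℝ)) t + (γ 2 - x 0 t) * x 2 t) (Ici 0) t := by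
      intro t ht
      simpa using hdk 2 le_rfl hK t ht
    have hS' : ∀ t ∈ Ici (0:ℝ),
        HasDerivWithinAt S ((fun _ : ℝ => (0:ℝ)) t *
          Real.exp (∫ u in (0:ℝ)..t, (x 0 u - γ 2))) (Ici 0) t := by
      intro t ht
      rw [hSconst]
      simpa using (hasDerivWithinAt_const t (Ici (0:ℝ)) (a 2))
    have h0 : x 2 0 = S 0 := by
      rw [hSconst]; exact ha0 2
    exact key (x 0) (γ 2) (x 2) S (fun _ => 0) hx0 hf
      (by rw [hSconst]; exact continuousOn_const) hS' h0
  | succ n hn ih =>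
    intro hkK
    obtain ⟨m, rfl⟩ : ∃ m, n = m + 1 := ⟨n - 1, by omega⟩
    have hihK : m + 1 ≤ K := by omega
    set S : ℝ → ℝ := fun t => ∑ i ∈ Finset.range (m + 1), a (m + 2 - i) * phi γ (m + 2) i t
      with hSdef
    have hScont : ContinuousOn S (Ici 0) :=
      (continuous_finset_sum _ fun i _ =>
        continuous_const.mul (phi_continuous γ i (m + 2))).continuousOn
    have hf : ∀ t ∈ Ici (0:ℝ),
        HasDerivWithinAt (x (m + 2)) (x (m + 1) t + (γ (m + 2) - x 0 t) * x (m + 2) t)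
          (Ici 0) t := by
      intro t ht
      have := hdk (m + 2) (by omega) hkK t ht
      have h2 : m + 2 ≠ 2 := by omega
      simpa [h2, show m ≠ 0 by omega] using this
    have hS' : ∀ t ∈ Ici (0:ℝ),
        HasDerivWithinAt S (x (m + 1) t *
          Real.exp (∫ u in (0:ℝ)..t, (x 0 u - γ (m + 2)))) (Ici 0) t := by
      intro t ht
      set E : ℝ := Real.exp ((γ (m + 1) - γ (m + 2)) * t) with hEdef
      set d : ℕ → ℝ := fun i =>
        Nat.casesOn i 0 (fun j => a (m + 2 - (j + 1)) * (phi γ (m + 1) j t * E)) with hddef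
      have hsum : HasDerivAt S (∑ i ∈ Finset.range (m + 1), d i) t := by
        refine HasDerivAt.fun_sum fun i _ => ?_
        match i with
        | 0 =>
          have : (fun s => a (m + 2 - 0) * phi γ (m + 2) 0 s) = fun _ => a (m + 2) := by
            funext s; simp [phi]
          rw [this]
          exact hasDerivAt_const t _
        | (j + 1) =>
          have h := (phi_hasDerivAt γ (m + 2) j t).const_mul (a (m + 2 - (j + 1)))
          simpa [hddef, hEdef] using h
      have hval : (∑ i ∈ Finset.range (m + 1), d i)
          = (∑ j ∈ Finset.range m, a (m + 1 - j) * phi γ (m + 1) j t) * E := by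
        rw [Finset.sum_range_succ', Finset.sum_mul]
        have hd0 : d 0 = 0 := rfl
        rw [hd0, add_zero]
        refine Finset.sum_congr rfl fun j _ => ?_
        have hidx : m + 2 - (j + 1) = m + 1 - j := by omega
        simp [hddef, hidx, mul_assoc]
      have hdiff : (∫ u in (0:ℝ)..t, (x 0 u - γ (m + 2)))
            - (∫ u in (0:ℝ)..t, (x 0 u - γ (m + 1)))
          = (γ (m + 1) - γ (m + 2)) * t := by
        rw [← intervalIntegral.integral_sub (hint (γ (m + 2)) t ht) (hint (γ (m + 1)) t ht)]
        simp only [sub_sub_sub_cancel_left]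
        rw [intervalIntegral.integral_const]
        simp [smul_eq_mul, mul_comm]
      have hihx : x (m + 1) t
          = (∑ j ∈ Finset.range m, a (m + 1 - j) * phi γ (m + 1) j t) *
              Real.exp (-∫ u in (0:ℝ)..t, (x 0 u - γ (m + 1))) := by
        have := ih hihK t ht
        simpa using this
      have hgoalval : x (m + 1) t * Real.exp (∫ u in (0:ℝ)..t, (x 0 u - γ (m + 2)))
          = ∑ i ∈ Finset.range (m + 1), d i := by
        rw [hval, hihx, hEdef, ← hdiff]
        rw [mul_assoc, ← Real.exp_add]
        rw [neg_add_eq_sub]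
      rw [hgoalval]
      exact hsum.hasDerivWithinAt
    have h0 : x (m + 2) 0 = S 0 := by
      have hS0 : S 0 = a (m + 2) := by
        show (∑ i ∈ Finset.range (m + 1), a (m + 2 - i) * phi γ (m + 2) i 0) = a (m + 2)
        rw [Finset.sum_eq_single_of_mem 0 (Finset.mem_range.2 (by omega))]
        · simp [phi]
        · intro i _ hi
          obtain ⟨j, rfl⟩ := Nat.exists_eq_succ_of_ne_zero hi
          simp [phi_zero]
      rw [hS0]; exact ha0 (m + 2)
    intro t ht
    exact key (x 0) (γ (m + 2)) (x (m + 2)) S (x (m + 1)) hx0 hf hScont hS' h0 t ht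
end
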